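/- arXiv:1404.7665 — 2 statements merged into one kernel-verified Lean document; each statement's English description precedes it below -/
import Mathlib

section
/- Let V be a finite set, let W₀ be an n×n real symmetric positive definite matrix, and for each s ∈ V let W_s be an n×n real symmetric positive semidefinite matrix. For S ⊆ V define W_S = W₀ + Σ_{s∈S} W_s. Then the set function g : 2^V → ℝ defined by g(S) = (1/n) log det(W_S) = log of the n-th root of det(W_S) is submodular and monotone increasing. -/
open Matrix
open scoped MatrixOrder

private lemma one_le_det_one_add {n : ℕ} {C : Matrix (Fin n) (Fin n) ℝ}
    (hC : C.PosSemidef) : 1 ≤ (1 + C).det := by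
  have hH := hC.isHermitian
  set U : Matrix (Fin n) (Fin n) ℝ := (hH.eigenvectorUnitary : Matrix (Fin n) (Fin n) ℝ) with hUdef
  have hU : U * star U = 1 := Matrix.mem_unitaryGroup_iff.mp hH.eigenvectorUnitary.2
  have h1 : (1 : Matrix (Fin n) (Fin n) ℝ) + C
      = U * (1 + diagonal (RCLike.ofReal ∘ hH.eigenvalues)) * star U := by
    rw [mul_add, mul_one, add_mul, hU, hUdef, ← Unitary.conjStarAlgAut_apply (S := ℝ), ← hH.spectral_theorem]
  have h2 : U.det * (star U).det = 1 := by rw [← det_mul, hU, det_one]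
  have h3 : (1 + diagonal (RCLike.ofReal ∘ hH.eigenvalues) : Matrix (Fin n) (Fin n) ℝ).det
      = ∏ i, (1 + hH.eigenvalues i) := by
    rw [← diagonal_one, diagonal_add, det_diagonal]
    simp
  have h4 : (1 : ℝ) ≤ ∏ i, (1 + hH.eigenvalues i) := by
    calc (1:ℝ) = ∏ _i : Fin n, (1:ℝ) := by simp
      _ ≤ ∏ i, (1 + hH.eigenvalues i) := by
          refine Finset.prod_le_prod (fun i _ => zero_le_one) (fun i _ => ?_)
          have := hC.eigenvalues_nonneg i
          linarith
  calc (1:ℝ) ≤ ∏ i, (1 + hH.eigenvalues i) := h4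
    _ = (1 + C).det := by
        rw [h1, det_mul, det_mul, h3]
        rw [mul_right_comm, mul_comm U.det, mul_assoc, ← mul_assoc (star U).det,
          mul_comm (star U).det, h2]
        ring

private lemma det_le_det_add' {n : ℕ} {A B : Matrix (Fin n) (Fin n) ℝ}
    (hA : A.PosDef) (hB : B.PosSemidef) : A.det ≤ (A + B).det := by
  have hAs := hA.posSemidef
  set S := CFC.sqrt A with hSdef
  have hS : S.PosSemidef := (CFC.sqrt_nonneg A).posSemidef
  have hSS : S * S = A := CFC.sqrt_mul_sqrt_self A hAs.nonneg
  have hdet2 : S.det * S.det = A.det := by rw [← det_mul, hSS]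
  have hdetS : IsUnit S.det := by
    refine isUnit_iff_ne_zero.mpr fun h => ?_
    have := hA.det_pos
    rw [← hdet2, h, mul_zero] at this
    exact lt_irrefl _ this
  have hSinv : (S⁻¹)ᴴ = S⁻¹ := hS.1.inv
  have hC : (S⁻¹ * B * S⁻¹).PosSemidef := by
    have := hB.mul_mul_conjTranspose_same S⁻¹
    rwa [hSinv] at this
  have key : A + B = S * (1 + S⁻¹ * B * S⁻¹) * S := by
    rw [mul_add, mul_one, add_mul, hSS]
    congr 1
    rw [Matrix.mul_assoc S, Matrix.nonsing_inv_mul_cancel_right _ _ hdetS,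
      Matrix.mul_nonsing_inv_cancel_left _ _ hdetS]
  have hd : (A + B).det = A.det * (1 + S⁻¹ * B * S⁻¹).det := by
    rw [key, det_mul, det_mul, ← hdet2]; ring
  rw [hd]
  nlinarith [one_le_det_one_add hC, hA.det_pos]

private lemma inv_sub_inv_psd {n : ℕ} {X D : Matrix (Fin n) (Fin n) ℝ}
    (hX : X.PosDef) (hD : D.PosSemidef) : (X⁻¹ - (X + D)⁻¹).PosSemidef := by
  have hY : (X + D).PosDef := hX.add_posSemidef hD
  set Y := X + D with hYdef
  have hYs := hY.posSemidef
  set S := CFC.sqrt Y with hSdef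
  have hS : S.PosSemidef := (CFC.sqrt_nonneg Y).posSemidef
  have hSS : S * S = Y := CFC.sqrt_mul_sqrt_self Y hYs.nonneg
  clear_value S
  have hdet2 : S.det * S.det = Y.det := by rw [← det_mul, hSS]
  have hdetS : IsUnit S.det := by
    refine isUnit_iff_ne_zero.mpr fun h => ?_
    have := hY.det_pos; rw [← hdet2, h, mul_zero] at this; exact lt_irrefl _ this
  have hSinv : (S⁻¹)ᴴ = S⁻¹ := hS.1.inv
  set C := S⁻¹ * X * S⁻¹ with hCdef
  clear_value C
  have hCpsd : C.PosSemidef := by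
    rw [hCdef]
    have := hX.posSemidef.mul_mul_conjTranspose_same S⁻¹; rwa [hSinv] at this
  have hdetSi : IsUnit (S⁻¹).det := (Matrix.isUnit_nonsing_inv_det S hdetS)
  have hdetC : IsUnit C.det := by
    rw [hCdef, det_mul, det_mul]
    exact (hdetSi.mul hX.det_pos.ne'.isUnit).mul hdetSi
  have hYC : S⁻¹ * Y * S⁻¹ = 1 := by
    rw [← hSS, Matrix.nonsing_inv_mul_cancel_left _ _ hdetS, Matrix.mul_nonsing_inv _ hdetS]
  have h1mC : (1 - C).PosSemidef := by
    have heq : (1 : Matrix (Fin n) (Fin n) ℝ) - C = S⁻¹ * D * S⁻¹ := by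
      rw [← hYC, hCdef, ← Matrix.sub_mul, ← Matrix.mul_sub, hYdef, add_sub_cancel_left]
    rw [heq]
    have := hD.mul_mul_conjTranspose_same S⁻¹; rwa [hSinv] at this
  -- R = sqrt C
  set R := CFC.sqrt C with hRdef
  have hR : R.PosSemidef := (CFC.sqrt_nonneg C).posSemidef
  have hRR : R * R = C := CFC.sqrt_mul_sqrt_self C hCpsd.nonneg
  clear_value R
  have hdetR : IsUnit R.det := by
    refine isUnit_iff_ne_zero.mpr fun h => ?_
    have : C.det = 0 := by rw [← hRR, det_mul, h, mul_zero]
    exact hdetC.ne_zero this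
  have hRinv : (R⁻¹)ᴴ = R⁻¹ := hR.1.inv
  have hCi : (C⁻¹ - 1).PosSemidef := by
    have heq : C⁻¹ - 1 = R⁻¹ * (1 - C) * R⁻¹ := by
      rw [Matrix.mul_sub, Matrix.sub_mul, mul_one, ← Matrix.mul_inv_rev, hRR]
      congr 1
      rw [← hRR, Matrix.nonsing_inv_mul_cancel_left _ _ hdetR,
        Matrix.mul_nonsing_inv _ hdetR]
    rw [heq]
    have := h1mC.mul_mul_conjTranspose_same R⁻¹; rwa [hRinv] at this
  have hXSCS : S * C * S = X := by
    rw [hCdef]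
    simp only [Matrix.mul_assoc]
    rw [Matrix.nonsing_inv_mul _ hdetS, mul_one,
      Matrix.mul_nonsing_inv_cancel_left _ _ hdetS]
  have heq : X⁻¹ - Y⁻¹ = S⁻¹ * (C⁻¹ - 1) * S⁻¹ := by
    have e1 : S⁻¹ * C⁻¹ * S⁻¹ = X⁻¹ := by
      rw [← hXSCS, Matrix.mul_inv_rev, Matrix.mul_inv_rev, Matrix.mul_assoc]
    have e2 : S⁻¹ * S⁻¹ = Y⁻¹ := by rw [← Matrix.mul_inv_rev, hSS]
    rw [Matrix.mul_sub, Matrix.sub_mul, mul_one, e1, e2]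
  rw [heq]
  have := hCi.mul_mul_conjTranspose_same S⁻¹; rwa [hSinv] at this

private lemma det_add_psd_eq {n : ℕ} {Z Wp : Matrix (Fin n) (Fin n) ℝ} (hZ : Z.PosDef)
    {T : Matrix (Fin n) (Fin n) ℝ} (hT : T * T = Wp) :
    (Z + Wp).det = Z.det * (1 + T * Z⁻¹ * T).det := by
  have hdZ : IsUnit Z.det := hZ.det_pos.ne'.isUnit
  have key : Z + Wp = Z * (1 + Z⁻¹ * T * T) := by
    calc Z + Wp = Z + Z * (Z⁻¹ * Wp) := by
          rw [Matrix.mul_nonsing_inv_cancel_left _ _ hdZ]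
      _ = Z * (1 + Z⁻¹ * T * T) := by
          rw [mul_add, mul_one, Matrix.mul_assoc Z⁻¹ T T, hT]
  rw [key, det_mul, Matrix.det_one_add_mul_comm, ← Matrix.mul_assoc]

private lemma det_ratio_le {n : ℕ} {X D Wp : Matrix (Fin n) (Fin n) ℝ}
    (hX : X.PosDef) (hD : D.PosSemidef) (hWp : Wp.PosSemidef) :
    (X + D + Wp).det * X.det ≤ (X + Wp).det * (X + D).det := by
  have hY : (X + D).PosDef := hX.add_posSemidef hD
  set T := CFC.sqrt Wp with hTdef
  have hT : T * T = Wp := CFC.sqrt_mul_sqrt_self Wp hWp.nonneg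
  have hTh : Tᴴ = T := (CFC.sqrt_nonneg Wp).posSemidef.1
  clear_value T
  have e1 : (X + Wp).det = X.det * (1 + T * X⁻¹ * T).det := det_add_psd_eq hX hT
  have e2 : (X + D + Wp).det = (X + D).det * (1 + T * (X + D)⁻¹ * T).det :=
    det_add_psd_eq hY hT
  have hM : (T * (X + D)⁻¹ * T).PosSemidef := by
    have := hY.inv.posSemidef.mul_mul_conjTranspose_same T; rwa [hTh] at this
  have hNM : (T * X⁻¹ * T - T * (X + D)⁻¹ * T).PosSemidef := by
    have h := (inv_sub_inv_psd hX hD).mul_mul_conjTranspose_same T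
    rw [hTh] at h
    convert h using 1
    rw [Matrix.mul_sub, Matrix.sub_mul]
  have h1M : (1 + T * (X + D)⁻¹ * T).PosDef := Matrix.PosDef.one.add_posSemidef hM
  have hdet : (1 + T * (X + D)⁻¹ * T).det ≤ (1 + T * X⁻¹ * T).det := by
    have := det_le_det_add' h1M hNM
    convert this using 2
    abel
  rw [e1, e2]
  nlinarith [mul_le_mul_of_nonneg_left hdet
    (le_of_lt (mul_pos hX.det_pos hY.det_pos)), h1M.det_pos, hX.det_pos, hY.det_pos]

/-- The log of the n-th root of the determinant of the controllability Gramian,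
`g(S) = (1/n) log det(W₀ + ∑_{s ∈ S} W_s)`, is a submodular and monotone increasing
set function of the actuator set `S`. -/
theorem logdet_nth_root_gramian_submodular_monotone
    {V : Type*} [Fintype V] [DecidableEq V] {n : ℕ}
    (W₀ : Matrix (Fin n) (Fin n) ℝ) (hW₀ : W₀.PosDef)
    (W : V → Matrix (Fin n) (Fin n) ℝ) (hW : ∀ s : V, (W s).PosSemidef)
    (g : Finset V → ℝ)
    (hg : ∀ S : Finset V, g S = (1 / (n : ℝ)) * Real.log (W₀ + ∑ s ∈ S, W s).det) :
    (∀ A B : Finset V, A ⊆ B → ∀ s : V, s ∉ B →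
      g (insert s A) - g A ≥ g (insert s B) - g B) ∧
    (∀ A B : Finset V, A ⊆ B → g A ≤ g B) := by
  have hsum : ∀ S : Finset V, (∑ s ∈ S, W s).PosSemidef := fun S =>
    Finset.sum_induction W Matrix.PosSemidef (fun a b ha hb => ha.add hb)
      Matrix.PosSemidef.zero (fun s _ => hW s)
  have hPD : ∀ S : Finset V, (W₀ + ∑ s ∈ S, W s).PosDef := fun S =>
    hW₀.add_posSemidef (hsum S)
  have hn : (0:ℝ) ≤ 1 / (n : ℝ) := by positivity
  constructor
  · intro A B hAB s hsB
    have hsA : s ∉ A := fun h => hsB (hAB h)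
    set X := W₀ + ∑ t ∈ A, W t with hXdef
    set D := ∑ t ∈ B \ A, W t with hDdef
    have hXpd : X.PosDef := by rw [hXdef]; exact hPD A
    have hDpsd : D.PosSemidef := by rw [hDdef]; exact hsum _
    clear_value X D
    have eA : W₀ + ∑ t ∈ A, W t = X := hXdef.symm
    have eB : W₀ + ∑ t ∈ B, W t = X + D := by
      rw [hXdef, hDdef, ← Finset.sum_sdiff hAB]; abel
    have eIA : W₀ + ∑ t ∈ insert s A, W t = X + W s := by
      rw [Finset.sum_insert hsA, hXdef]; abel
    have eIB : W₀ + ∑ t ∈ insert s B, W t = X + D + W s := by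
      rw [Finset.sum_insert hsB, ← Finset.sum_sdiff hAB, hXdef, hDdef]; abel
    have hXD : (X + D).PosDef := hXpd.add_posSemidef hDpsd
    have hXW : (X + W s).PosDef := hXpd.add_posSemidef (hW s)
    have hXDW : (X + D + W s).PosDef := hXD.add_posSemidef (hW s)
    have key := det_ratio_le hXpd hDpsd (hW s)
    have hlog : Real.log (X + D + W s).det + Real.log X.det ≤
        Real.log (X + W s).det + Real.log (X + D).det := by
      rw [← Real.log_mul hXDW.det_pos.ne' hXpd.det_pos.ne',
        ← Real.log_mul hXW.det_pos.ne' hXD.det_pos.ne']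
      exact Real.log_le_log (mul_pos hXDW.det_pos hXpd.det_pos) key
    rw [hg, hg, hg, hg, eA, eB, eIA, eIB]
    nlinarith [mul_nonneg hn (sub_nonneg.mpr hlog)]
  · intro A B hAB
    have eB : W₀ + ∑ t ∈ B, W t = (W₀ + ∑ t ∈ A, W t) + ∑ t ∈ B \ A, W t := by
      rw [← Finset.sum_sdiff hAB]; abel
    have hdet : (W₀ + ∑ t ∈ A, W t).det ≤ (W₀ + ∑ t ∈ B, W t).det := by
      rw [eB]; exact det_le_det_add' (hPD A) (hsum _)
    rw [hg, hg]
    exact mul_le_mul_of_nonneg_left (Real.log_le_log (hPD A).det_pos hdet) hn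
end

section
/- Let V be a finite set, let W₀ be an n×n real symmetric positive definite matrix, for each s ∈ V let W_s be an n×n real symmetric positive semidefinite matrix, and let C ∈ ℝ^{p×n} with p ≤ n and rank(C) = p. For S ⊆ V define W_S = W₀ + Σ_{s∈S} W_s. Then the set function g₁ : 2^V → ℝ defined by g₁(S) = log det(C W_S Cᵀ) is submodular and monotone increasing. -/
open Matrix

section Aux

variable {m : ℕ}

open scoped MatrixOrder in
/-- Square root of a positive semidefinite matrix. -/
noncomputable def Matrix.PosSemidef.sqrt {D : Matrix (Fin m) (Fin m) ℝ} (_ : D.PosSemidef) :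
    Matrix (Fin m) (Fin m) ℝ :=
  CFC.sqrt D

open scoped MatrixOrder in
lemma Matrix.PosSemidef.sqrt_mul_self {D : Matrix (Fin m) (Fin m) ℝ} (hD : D.PosSemidef) :
    hD.sqrt * hD.sqrt = D :=
  CFC.sqrt_mul_sqrt_self D hD.nonneg

open scoped MatrixOrder in
lemma Matrix.PosSemidef.posSemidef_sqrt {D : Matrix (Fin m) (Fin m) ℝ} (hD : D.PosSemidef) :
    hD.sqrt.PosSemidef :=
  (CFC.sqrt_nonneg D).posSemidef

/-- If `E` is positive semidefinite then `det (1 + E) ≥ 1`. -/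
lemma aux_one_le_det_one_add {E : Matrix (Fin m) (Fin m) ℝ} (hE : E.PosSemidef) :
    1 ≤ (1 + E).det := by
  have hspec := hE.1.spectral_theorem
  set U := (hE.1.eigenvectorUnitary : Matrix (Fin m) (Fin m) ℝ) with hUdef
  have hU : U * star U = 1 := Matrix.mem_unitaryGroup_iff.mp hE.1.eigenvectorUnitary.2
  set d : Fin m → ℝ := RCLike.ofReal ∘ hE.1.eigenvalues with hd
  have key : 1 + E = U * (1 + diagonal d) * star U := by
    rw [mul_add, add_mul, mul_one, hU, hspec, Unitary.conjStarAlgAut_apply]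
  have hU' : star U * U = 1 := Matrix.mem_unitaryGroup_iff'.mp hE.1.eigenvectorUnitary.2
  have hdet : (1 + E).det = (1 + diagonal d).det := by
    rw [key, det_mul, det_mul, mul_comm, ← mul_assoc, ← det_mul, hU']
    simp
  rw [hdet]
  have h1 : (1 : Matrix (Fin m) (Fin m) ℝ) + diagonal d = diagonal (fun i => 1 + d i) := by
    rw [← diagonal_one, diagonal_add]
  rw [h1, det_diagonal]
  have hprod := Finset.prod_le_prod (s := Finset.univ)
    (f := fun _ : Fin m => (1 : ℝ)) (g := fun i => 1 + d i)
    (fun i _ => zero_le_one)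
    (fun i _ => by
      have := hE.eigenvalues_nonneg i
      simp only [hd, Function.comp_apply, RCLike.ofReal_real_eq_id, id_eq]
      linarith)
  simpa using hprod

/-- Factorization of `det (X + D)` for `X` positive definite and `D` positive semidefinite. -/
lemma aux_det_add_eq {X D : Matrix (Fin m) (Fin m) ℝ}
    (hX : X.PosDef) (hD : D.PosSemidef) :
    (X + D).det = X.det * (1 + hD.sqrt * X⁻¹ * hD.sqrt).det := by
  have hXdet : IsUnit X.det := hX.det_pos.ne'.isUnit
  have h1 : X + D = X * (1 + X⁻¹ * D) := by
    rw [mul_add, mul_one, ← mul_assoc, Matrix.mul_nonsing_inv _ hXdet, one_mul]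
  rw [h1, det_mul]
  congr 1
  conv_lhs => rw [← hD.sqrt_mul_self]
  rw [← mul_assoc, det_one_add_mul_comm, mul_assoc]

/-- The sandwiched matrix `√D * X⁻¹ * √D` is positive semidefinite. -/
lemma aux_sandwich_psd {X D : Matrix (Fin m) (Fin m) ℝ}
    (hX : X.PosDef) (hD : D.PosSemidef) :
    (hD.sqrt * X⁻¹ * hD.sqrt).PosSemidef := by
  have h := hX.inv.posSemidef.conjTranspose_mul_mul_same hD.sqrt
  rwa [hD.posSemidef_sqrt.1.eq] at h

/-- Monotonicity of the determinant along positive semidefinite perturbations. -/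
lemma aux_det_le_det_add {X E : Matrix (Fin m) (Fin m) ℝ}
    (hX : X.PosDef) (hE : E.PosSemidef) : X.det ≤ (X + E).det := by
  rw [aux_det_add_eq hX hE]
  have h1 := aux_one_le_det_one_add (aux_sandwich_psd hX hE)
  nlinarith [hX.det_pos]

/-- Antitonicity of the inverse: `X⁻¹ - (X+E)⁻¹` is positive semidefinite. -/
lemma aux_inv_sub_inv_psd {X E : Matrix (Fin m) (Fin m) ℝ}
    (hX : X.PosDef) (hE : E.PosSemidef) :
    (X⁻¹ - (X + E)⁻¹).PosSemidef := by
  set Y := X + E with hYdef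
  have hY : Y.PosDef := hX.add_posSemidef hE
  have hXdet : IsUnit X.det := hX.det_pos.ne'.isUnit
  have hYdet : IsUnit Y.det := hY.det_pos.ne'.isUnit
  have fac1 : Y⁻¹ * E * X⁻¹ = X⁻¹ - Y⁻¹ := by
    have hE' : E = Y - X := by rw [hYdef]; abel
    rw [hE', mul_sub, sub_mul, Matrix.nonsing_inv_mul _ hYdet, one_mul, mul_assoc,
      Matrix.mul_nonsing_inv _ hXdet, mul_one]
  have fac2 : X⁻¹ * E * Y⁻¹ = X⁻¹ - Y⁻¹ := by
    have hE' : E = Y - X := by rw [hYdef]; abel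
    rw [hE', mul_sub, sub_mul, Matrix.nonsing_inv_mul _ hXdet, one_mul, mul_assoc,
      Matrix.mul_nonsing_inv _ hYdet, mul_one]
  have key : X⁻¹ - Y⁻¹ = Y⁻¹ * E * Y⁻¹ + Y⁻¹ * E * (X⁻¹ * E * Y⁻¹) := by
    calc X⁻¹ - Y⁻¹ = Y⁻¹ * E * X⁻¹ := fac1.symm
    _ = Y⁻¹ * E * (Y⁻¹ + (X⁻¹ - Y⁻¹)) := by rw [add_sub_cancel]
    _ = Y⁻¹ * E * Y⁻¹ + Y⁻¹ * E * (X⁻¹ - Y⁻¹) := by rw [mul_add]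
    _ = Y⁻¹ * E * Y⁻¹ + Y⁻¹ * E * (X⁻¹ * E * Y⁻¹) := by rw [fac2]
  rw [key]
  have hterm1 : (Y⁻¹ * E * Y⁻¹).PosSemidef := by
    have h := hE.conjTranspose_mul_mul_same Y⁻¹
    rwa [hY.inv.1.eq] at h
  have hterm2 : (Y⁻¹ * E * (X⁻¹ * E * Y⁻¹)).PosSemidef := by
    have h := hX.inv.posSemidef.conjTranspose_mul_mul_same (E * Y⁻¹)
    have hadj : (E * Y⁻¹)ᴴ = Y⁻¹ * E := by
      rw [conjTranspose_mul, hY.inv.1.eq, hE.1.eq]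
    rw [hadj] at h
    convert h using 1
    · rfl
    simp only [Matrix.mul_assoc]
  exact hterm1.add hterm2

/-- The key determinant inequality giving submodularity of `log det`. -/
lemma aux_det_submodular {X E D : Matrix (Fin m) (Fin m) ℝ}
    (hX : X.PosDef) (hE : E.PosSemidef) (hD : D.PosSemidef) :
    (X + E + D).det * X.det ≤ (X + D).det * (X + E).det := by
  set Y := X + E with hYdef
  have hY : Y.PosDef := hX.add_posSemidef hE
  set T := hD.sqrt with hT
  have h1 : (X + D).det = X.det * (1 + T * X⁻¹ * T).det := aux_det_add_eq hX hD
  have h2 : (Y + D).det = Y.det * (1 + T * Y⁻¹ * T).det := aux_det_add_eq hY hD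
  have hmono : (1 + T * Y⁻¹ * T).det ≤ (1 + T * X⁻¹ * T).det := by
    have hbase : (1 + T * Y⁻¹ * T).PosDef :=
      Matrix.PosDef.one.add_posSemidef (aux_sandwich_psd hY hD)
    have hpert : (T * (X⁻¹ - Y⁻¹) * T).PosSemidef := by
      have h := (aux_inv_sub_inv_psd hX hE).conjTranspose_mul_mul_same T
      rwa [hD.posSemidef_sqrt.1.eq] at h
    have hsum : (1 + T * Y⁻¹ * T) + T * (X⁻¹ - Y⁻¹) * T = 1 + T * X⁻¹ * T := by
      rw [mul_sub, sub_mul]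
      abel
    have := aux_det_le_det_add hbase hpert
    rwa [hsum] at this
  have hXd := hX.det_pos
  have hYd := hY.det_pos
  calc (X + E + D).det * X.det = Y.det * (1 + T * Y⁻¹ * T).det * X.det := by rw [← hYdef, h2]
  _ ≤ Y.det * (1 + T * X⁻¹ * T).det * X.det :=
      mul_le_mul_of_nonneg_right (mul_le_mul_of_nonneg_left hmono hYd.le) hXd.le
  _ = (X + D).det * (X + E).det := by rw [h1]; ring

end Aux

/-- For `C` of full row rank and `M` positive definite, `C * M * Cᵀ` is positive definite. -/
lemma aux_cwc_posDef {n p : ℕ} (C : Matrix (Fin p) (Fin n) ℝ) (hC : C.rank = p)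
    {M : Matrix (Fin n) (Fin n) ℝ} (hM : M.PosDef) : (C * M * Cᵀ).PosDef := by
  have hCT : Cᵀ = Cᴴ := by ext i j; simp [conjTranspose_apply]
  have hker : Function.Injective (Cᵀ).mulVecLin := by
    rw [← LinearMap.ker_eq_bot]
    have hrank : (Cᵀ).rank = p := by rw [Matrix.rank_transpose, hC]
    have hrn := LinearMap.finrank_range_add_finrank_ker (Cᵀ).mulVecLin
    rw [Matrix.rank] at hrank
    rw [hrank] at hrn
    simp only [Module.finrank_fintype_fun_eq_card, Fintype.card_fin] at hrn
    have : Module.finrank ℝ (LinearMap.ker (Cᵀ).mulVecLin) = 0 := by omega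
    exact Submodule.finrank_eq_zero.mp this
  refine Matrix.PosDef.of_dotProduct_mulVec_pos ?_ ?_
  · rw [hCT]
    exact isHermitian_mul_mul_conjTranspose _ hM.1
  · intro x hx
    have hy : Cᵀ *ᵥ x ≠ 0 := by
      intro h
      apply hx
      have h0 : (Cᵀ).mulVecLin x = (Cᵀ).mulVecLin 0 := by
        rw [Matrix.mulVecLin_apply, Matrix.mulVecLin_apply, Matrix.mulVec_zero, h]
      exact hker h0
    have := hM.dotProduct_mulVec_pos hy
    rw [star_trivial] at this ⊢
    calc x ⬝ᵥ (C * M * Cᵀ) *ᵥ x = x ⬝ᵥ C *ᵥ ((M * Cᵀ) *ᵥ x) := by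
          rw [mulVec_mulVec, Matrix.mul_assoc]
    _ = (x ᵥ* C) ⬝ᵥ ((M * Cᵀ) *ᵥ x) := by rw [dotProduct_mulVec]
    _ = (Cᵀ *ᵥ x) ⬝ᵥ M *ᵥ (Cᵀ *ᵥ x) := by rw [← mulVec_transpose, mulVec_mulVec]
    _ > 0 := this

/-- For any `C` and `M` positive semidefinite, `C * M * Cᵀ` is positive semidefinite. -/
lemma aux_cwc_psd {n p : ℕ} (C : Matrix (Fin p) (Fin n) ℝ)
    {M : Matrix (Fin n) (Fin n) ℝ} (hM : M.PosSemidef) : (C * M * Cᵀ).PosSemidef := by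
  have hCT : Cᵀ = Cᴴ := by ext i j; simp [conjTranspose_apply]
  rw [hCT]
  exact hM.mul_mul_conjTranspose_same C

/-- A finite sum of positive semidefinite matrices is positive semidefinite. -/
lemma aux_sum_psd {n : ℕ} {V : Type*} (S : Finset V) (W : V → Matrix (Fin n) (Fin n) ℝ)
    (hW : ∀ s, (W s).PosSemidef) : (∑ s ∈ S, W s).PosSemidef := by
  classical
  induction S using Finset.induction_on with
  | empty => simpa using Matrix.PosSemidef.zero
  | insert _ _ h ih =>
    rw [Finset.sum_insert h]
    exact (hW _).add ih

/-- For a full-row-rank weight matrix `C ∈ ℝ^{p×n}` (`p ≤ n`, `rank C = p`), the weighted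
log determinant `g₁(S) = log det(C W_S Cᵀ)` of the controllability Gramian
`W_S = W₀ + ∑_{s ∈ S} W_s` is a submodular and monotone increasing set function. -/
theorem weighted_logdet_gramian_submodular_monotone
    {V : Type*} [Fintype V] [DecidableEq V] {n p : ℕ}
    (hpn : p ≤ n)
    (C : Matrix (Fin p) (Fin n) ℝ) (hC : C.rank = p)
    (W₀ : Matrix (Fin n) (Fin n) ℝ) (hW₀ : W₀.PosDef)
    (W : V → Matrix (Fin n) (Fin n) ℝ) (hW : ∀ s : V, (W s).PosSemidef)
    (g₁ : Finset V → ℝ)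
    (hg₁ : ∀ S : Finset V, g₁ S = Real.log (C * (W₀ + ∑ s ∈ S, W s) * Cᵀ).det) :
    (∀ A B : Finset V, A ⊆ B → ∀ s : V, s ∉ B →
      g₁ (insert s A) - g₁ A ≥ g₁ (insert s B) - g₁ B) ∧
    (∀ A B : Finset V, A ⊆ B → g₁ A ≤ g₁ B) := by
  -- the Gramian-weighted matrix for each subset
  set M : Finset V → Matrix (Fin p) (Fin p) ℝ :=
    fun S => C * (W₀ + ∑ s ∈ S, W s) * Cᵀ with hM
  have hMpd : ∀ S : Finset V, (M S).PosDef := fun S =>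
    aux_cwc_posDef C hC (hW₀.add_posSemidef (aux_sum_psd S W hW))
  -- additivity of the sandwich map
  have hadd : ∀ (P Q : Matrix (Fin n) (Fin n) ℝ),
      C * (P + Q) * Cᵀ = C * P * Cᵀ + C * Q * Cᵀ := by
    intro P Q
    rw [Matrix.mul_add, Matrix.add_mul]
  have hsplit : ∀ A B : Finset V, A ⊆ B →
      M B = M A + C * (∑ s ∈ B \ A, W s) * Cᵀ := by
    intro A B hAB
    have hsum : W₀ + ∑ s ∈ B, W s = W₀ + ∑ s ∈ A, W s + ∑ s ∈ B \ A, W s := by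
      rw [← Finset.sum_sdiff hAB]; abel
    rw [hM]
    dsimp only
    rw [hsum, hadd]
  have hinsert : ∀ (A : Finset V) (s : V), s ∉ A →
      M (insert s A) = M A + C * W s * Cᵀ := by
    intro A s hs
    have hsum : W₀ + ∑ t ∈ insert s A, W t = W₀ + ∑ t ∈ A, W t + W s := by
      rw [Finset.sum_insert hs]; abel
    rw [hM]
    dsimp only
    rw [hsum, hadd]
  constructor
  · -- submodularity
    intro A B hAB s hsB
    have hsA : s ∉ A := fun h => hsB (hAB h)
    set X := M A with hX
    set E := C * (∑ t ∈ B \ A, W t) * Cᵀ with hE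
    set D := C * W s * Cᵀ with hD
    have hXpd : X.PosDef := hMpd A
    have hEpsd : E.PosSemidef := aux_cwc_psd C (aux_sum_psd _ W hW)
    have hDpsd : D.PosSemidef := aux_cwc_psd C (hW s)
    have hMB : M B = X + E := hsplit A B hAB
    have hMsA : M (insert s A) = X + D := hinsert A s hsA
    have hMsB : M (insert s B) = X + E + D := by
      rw [hinsert B s hsB, hMB]
    have hkey := aux_det_submodular hXpd hEpsd hDpsd
    have hXd := hXpd.det_pos
    have hXDd := (hXpd.add_posSemidef hDpsd).det_pos
    have hXEd := (hXpd.add_posSemidef hEpsd).det_pos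
    have hXEDd := ((hXpd.add_posSemidef hEpsd).add_posSemidef hDpsd).det_pos
    have hlog : Real.log ((X + E + D).det * X.det) ≤
        Real.log ((X + D).det * (X + E).det) :=
      Real.log_le_log (by positivity) hkey
    rw [Real.log_mul hXEDd.ne' hXd.ne', Real.log_mul hXDd.ne' hXEd.ne'] at hlog
    rw [hg₁ (insert s A), hg₁ A, hg₁ (insert s B), hg₁ B]
    rw [show C * (W₀ + ∑ t ∈ insert s A, W t) * Cᵀ = M (insert s A) from rfl, hMsA]
    rw [show C * (W₀ + ∑ t ∈ A, W t) * Cᵀ = M A from rfl, ← hX]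
    rw [show C * (W₀ + ∑ t ∈ insert s B, W t) * Cᵀ = M (insert s B) from rfl, hMsB]
    rw [show C * (W₀ + ∑ t ∈ B, W t) * Cᵀ = M B from rfl, hMB]
    linarith
  · -- monotonicity
    intro A B hAB
    have hXpd : (M A).PosDef := hMpd A
    have hEpsd : (C * (∑ s ∈ B \ A, W s) * Cᵀ).PosSemidef :=
      aux_cwc_psd C (aux_sum_psd _ W hW)
    have hdet : (M A).det ≤ (M B).det := by
      rw [hsplit A B hAB]
      exact aux_det_le_det_add hXpd hEpsd
    rw [hg₁ A, hg₁ B]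
    exact Real.log_le_log hXpd.det_pos hdet
end
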